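/- Discrete co-area formula: for every f : V → ℝ, ∫_{−∞}^{∞} 𝔪(∂Ω_{f,t}) dt = (1/2)Σ_{y,z∈V}|f(y)−f(z)|𝔪_{yz}, where Ω_{f,t} = {x ∈ V : f(x) > t} and 𝔪(∂Ω) = Σ_{y∈Ω}Σ_{z∈V∖Ω}𝔪_{yz}. -/

import Mathlib

open Finset Filter Topology MeasureTheory
open scoped Classical

noncomputable section

variable {V : Type*}

/-- Vertex weight `μ(x) = Σ_y μ_{xy}`. -/
def vdeg [Fintype V] (μ : V → V → ℝ) (x : V) : ℝ := ∑ y, μ x y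

/-- Transition probability kernel `P(x,y) = μ_{xy}/μ(x)`. -/
def transP [Fintype V] (μ : V → V → ℝ) (x y : V) : ℝ := μ x y / vdeg μ x

/-- `m` is the Perron measure of `(V,μ)`. -/
def IsPerron [Fintype V] (μ : V → V → ℝ) (m : V → ℝ) : Prop :=
  (∀ x, 0 < m x) ∧ (∑ x, m x = 1) ∧ ∀ x, m x = ∑ y, m y * transP μ y x

/-- Mean transition probability kernel `𝒫 = (P + ←P)/2`. -/
def meanK [Fintype V] (μ : V → V → ℝ) (m : V → ℝ) (x y : V) : ℝ :=
  (transP μ x y + m y / m x * transP μ y x) / 2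

/-- There is a directed path of length `n` from `x` to `y`. -/
def HasPathLen (μ : V → V → ℝ) (x y : V) (n : ℕ) : Prop :=
  ∃ c : ℕ → V, c 0 = x ∧ c n = y ∧ ∀ i < n, 0 < μ (c i) (c (i + 1))

/-- The (non-symmetric) graph distance. -/
def gdist (μ : V → V → ℝ) (x y : V) : ℝ :=
  sInf {r : ℝ | ∃ n : ℕ, (r : ℝ) = (n : ℝ) ∧ HasPathLen μ x y n}

/-- The graph is simple: no loops. -/
def IsSimpleW (μ : V → V → ℝ) : Prop := ∀ x, μ x x = 0

/-- The edge weight is nonnegative. -/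
def Nonneg (μ : V → V → ℝ) : Prop := ∀ x y, 0 ≤ μ x y

/-- The graph is strongly connected. -/
def StronglyConnectedW (μ : V → V → ℝ) : Prop := ∀ x y, ∃ n, HasPathLen μ x y n

/-- `π` is a coupling of the probability measures `ν₀, ν₁`. -/
def IsCoupling [Fintype V] (π : V → V → ℝ) (ν₀ ν₁ : V → ℝ) : Prop :=
  (∀ x y, 0 ≤ π x y) ∧ (∀ x, ∑ y, π x y = ν₀ x) ∧ (∀ y, ∑ x, π x y = ν₁ y)

/-- The L¹-Wasserstein distance with cost `d`. -/
def Wass [Fintype V] (d : V → V → ℝ) (ν₀ ν₁ : V → ℝ) : ℝ :=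
  sInf {c : ℝ | ∃ π, IsCoupling π ν₀ ν₁ ∧ c = ∑ x, ∑ y, d x y * π x y}

/-- The probability measure `ν^ε_x`. -/
def nu [Fintype V] (P : V → V → ℝ) (ε : ℝ) (x z : V) : ℝ :=
  if z = x then 1 - ε else ε * P x z

/-- `κ_ε(x,y) = 1 − W(ν^ε_x, ν^ε_y)/d(x,y)`. -/
def kappaEps [Fintype V] (μ : V → V → ℝ) (m : V → ℝ) (ε : ℝ) (x y : V) : ℝ :=
  1 - Wass (gdist μ) (nu (meanK μ m) ε x) (nu (meanK μ m) ε y) / gdist μ x y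

/-- The (positive) Chung Laplacian associated with a kernel `P`. -/
def chungL [Fintype V] (P : V → V → ℝ) (f : V → ℝ) (x : V) : ℝ :=
  f x - ∑ y, P x y * f y

/-- The negative Laplacian `Δ = −ℒ`. -/
def negL [Fintype V] (P : V → V → ℝ) (f : V → ℝ) (x : V) : ℝ :=
  (∑ y, P x y * f y) - f x

/-- `f` is 1-Lipschitz with respect to the non-symmetric distance `d`. -/
def Lip1 (d : V → V → ℝ) (f : V → ℝ) : Prop := ∀ x y, f y - f x ≤ d x y

/-- The asymptotic mean curvature `ℋ_x = ℒρ_x(x)`. -/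
def Hout [Fintype V] (μ : V → V → ℝ) (m : V → ℝ) (x : V) : ℝ :=
  chungL (meanK μ m) (fun y => gdist μ x y) x

/-- The reverse asymptotic mean curvature `←ℋ_x = ℒ←ρ_x(x)`. -/
def Hin [Fintype V] (μ : V → V → ℝ) (m : V → ℝ) (x : V) : ℝ :=
  chungL (meanK μ m) (fun y => gdist μ y x) x

/-- The mixed asymptotic mean curvature `ℋ(x,y) = −(ℋ_x + ←ℋ_y)`. -/
def Hmix [Fintype V] (μ : V → V → ℝ) (m : V → ℝ) (x y : V) : ℝ :=
  -(Hout μ m x + Hin μ m y)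

/-- The neighborhood `𝒩_x = N_x ∪ ←N_x`. -/
def nbr [Fintype V] (μ : V → V → ℝ) (x : V) : Finset V :=
  Finset.univ.filter (fun y => 0 < μ x y ∨ 0 < μ y x)

/-- discrete co-area formula. -/
theorem coarea_formula
    {V : Type*} [Fintype V] (w : V → V → ℝ)
    (hsymm : ∀ y z, w y z = w z y) (hw : ∀ y z, 0 ≤ w y z) (f : V → ℝ) :
    (∫ t : ℝ, ∑ y ∈ Finset.univ.filter (fun v => t < f v),
        ∑ z ∈ (Finset.univ.filter (fun v : V => t < f v))ᶜ, w y z)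
      = (1/2) * ∑ y, ∑ z, |f y - f z| * w y z := by
  have key : ∀ t : ℝ,
      (∑ y ∈ Finset.univ.filter (fun v => t < f v),
        ∑ z ∈ (Finset.univ.filter (fun v : V => t < f v))ᶜ, w y z)
      = ∑ y : V, ∑ z : V, (Set.Ico (f z) (f y)).indicator (fun _ => w y z) t := by
    intro t
    simp only [Finset.compl_filter, not_lt, Finset.sum_filter, Set.indicator_apply,
      Set.mem_Ico]
    refine Finset.sum_congr rfl fun y _ => ?_
    split_ifs with h
    · refine Finset.sum_congr rfl fun z _ => ?_
      split_ifs <;> tauto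
    · rw [Finset.sum_eq_zero]
      intro z _
      split_ifs <;> tauto
  have hint : ∀ y z : V,
      MeasureTheory.Integrable
        (fun t => (Set.Ico (f z) (f y)).indicator (fun _ => w y z) t) := by
    intro y z
    rw [MeasureTheory.integrable_indicator_iff measurableSet_Ico]
    exact MeasureTheory.integrableOn_const measure_Ico_lt_top.ne
  have hval : ∀ y z : V,
      (∫ t : ℝ, (Set.Ico (f z) (f y)).indicator (fun _ => w y z) t)
        = max (f y - f z) 0 * w y z := by
    intro y z
    rw [MeasureTheory.integral_indicator_const _ measurableSet_Ico,
      measureReal_def, Real.volume_Ico, smul_eq_mul]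
    rcases le_total (f y - f z) 0 with h | h
    · simp [ENNReal.ofReal_eq_zero.2 h, max_eq_right h]
    · simp [ENNReal.toReal_ofReal h, max_eq_left h]
  calc (∫ t : ℝ, ∑ y ∈ Finset.univ.filter (fun v => t < f v),
        ∑ z ∈ (Finset.univ.filter (fun v : V => t < f v))ᶜ, w y z)
      = ∫ t : ℝ, ∑ y : V, ∑ z : V,
          (Set.Ico (f z) (f y)).indicator (fun _ => w y z) t := by
        exact MeasureTheory.integral_congr_ae (Filter.Eventually.of_forall key)
    _ = ∑ y : V, ∑ z : V,
          ∫ t : ℝ, (Set.Ico (f z) (f y)).indicator (fun _ => w y z) t := by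
        rw [MeasureTheory.integral_finset_sum _
          (fun y _ => MeasureTheory.integrable_finset_sum _ (fun z _ => hint y z))]
        exact Finset.sum_congr rfl fun y _ =>
          MeasureTheory.integral_finset_sum _ (fun z _ => hint y z)
    _ = ∑ y : V, ∑ z : V, max (f y - f z) 0 * w y z := by
        exact Finset.sum_congr rfl fun y _ => Finset.sum_congr rfl fun z _ => hval y z
    _ = (1/2) * ∑ y, ∑ z, |f y - f z| * w y z := by
        have hAB : (∑ y : V, ∑ z : V, max (f y - f z) 0 * w y z)
            = ∑ y : V, ∑ z : V, max (f z - f y) 0 * w z y := by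
          rw [Finset.sum_comm]
        have hsum : (∑ y : V, ∑ z : V, max (f y - f z) 0 * w y z)
            + (∑ y : V, ∑ z : V, max (f z - f y) 0 * w z y)
            = ∑ y : V, ∑ z : V, |f y - f z| * w y z := by
          rw [← Finset.sum_add_distrib]
          refine Finset.sum_congr rfl fun y _ => ?_
          rw [← Finset.sum_add_distrib]
          refine Finset.sum_congr rfl fun z _ => ?_
          rw [hsymm z y]
          rcases le_total (f y) (f z) with h | h
          · rw [max_eq_right (sub_nonpos.2 h), max_eq_left (sub_nonneg.2 h),
              abs_of_nonpos (sub_nonpos.2 h)]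
            ring
          · rw [max_eq_left (sub_nonneg.2 h), max_eq_right (sub_nonpos.2 h),
              abs_of_nonneg (sub_nonneg.2 h)]
            ring
        linarith
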